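/- Let $(\eta_\ell)_{\ell\in\mathbb{N}}$ be a sequence of nonnegative reals satisfying: (1) for all $\ell, N \in \mathbb{N}$, $\sum_{k=\ell}^{\ell+N} \eta_k^2 \le D(N) \eta_\ell^2$ for a function $D:\mathbb{N}\to(1,\infty)$; (2) quasi-monotonicity: $\eta_{\ell+k}^2 \le C_{\rm mon}\eta_\ell^2$ for all $\ell,k$. Suppose there exists $N_0\in\mathbb{N}$ with $q_{\log} := \log(D(N_0)) - \sum_{j=1}^{N_0} D(j)^{-1} < 0$. Then with $q := \exp(q_{\log}/N_0) < 1$ and $C := C_{\rm mon}\exp(-q_{\log})$, there holds $\eta_{\ell+k}^2 \le C q^k \eta_\ell^2$ for all $k,\ell\in\mathbb{N}$. -/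

import Mathlib

open Finset

/-- Lemma `lem:Nsum`: if a nonnegative sequence satisfies the summed
estimator bound and quasi-monotonicity, and `q_log < 0`, then the sequence contracts
geometrically with `q = exp(q_log/N₀) < 1` and `C = C_mon * exp(-q_log)`. -/
theorem stmt_0 (η : ℕ → ℝ) (hη : ∀ ℓ, 0 ≤ η ℓ)
    (D : ℕ → ℝ) (hD : ∀ N, 1 < D N)
    (hsum : ∀ ℓ N : ℕ, ∑ k ∈ Finset.Icc ℓ (ℓ + N), (η k) ^ 2 ≤ D N * (η ℓ) ^ 2)
    (Cmon : ℝ) (hCmon : 0 < Cmon)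
    (hmon : ∀ ℓ k : ℕ, (η (ℓ + k)) ^ 2 ≤ Cmon * (η ℓ) ^ 2)
    (N₀ : ℕ) (hN₀ : 0 < N₀)
    (qlog : ℝ)
    (hqlog : qlog = Real.log (D N₀) - ∑ j ∈ Finset.Icc 1 N₀, (D j)⁻¹)
    (hneg : qlog < 0) :
    Real.exp (qlog / N₀) < 1 ∧
      ∀ k ℓ : ℕ, (η (ℓ + k)) ^ 2 ≤
        (Cmon * Real.exp (-qlog)) * (Real.exp (qlog / N₀)) ^ k * (η ℓ) ^ 2 := by
  have hN₀R : (0:ℝ) < N₀ := by exact_mod_cast hN₀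
  have hfac : ∀ i : ℕ, 0 ≤ 1 - (D i)⁻¹ := by
    intro i
    have h1 : (D i)⁻¹ ≤ 1 := by
      exact inv_le_one_of_one_le₀ (hD i).le
    linarith
  have hfacexp : ∀ i : ℕ, 1 - (D i)⁻¹ ≤ Real.exp (-(D i)⁻¹) := by
    intro i
    have := Real.add_one_le_exp (-(D i)⁻¹)
    linarith
  -- Key step: one block of N₀ steps contracts by exp qlog
  have key : ∀ ℓ, (η (ℓ + N₀)) ^ 2 ≤ Real.exp qlog * (η ℓ) ^ 2 := by
    intro ℓ
    have hanonneg : ∀ j, 0 ≤ ∑ k ∈ Finset.Icc (ℓ + j) (ℓ + N₀), (η k) ^ 2 :=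
      fun j => Finset.sum_nonneg fun k _ => sq_nonneg _
    have hstep : ∀ j, j < N₀ →
        ∑ k ∈ Finset.Icc (ℓ + (j + 1)) (ℓ + N₀), (η k) ^ 2
          ≤ (1 - (D (N₀ - j))⁻¹) * ∑ k ∈ Finset.Icc (ℓ + j) (ℓ + N₀), (η k) ^ 2 := by
      intro j hj
      have hDpos : 0 < D (N₀ - j) := lt_trans one_pos (hD _)
      have hle : ℓ + j ≤ ℓ + N₀ := by omega
      have hsplit : ∑ k ∈ Finset.Icc (ℓ + j) (ℓ + N₀), (η k) ^ 2
          = (η (ℓ + j)) ^ 2 + ∑ k ∈ Finset.Icc (ℓ + (j + 1)) (ℓ + N₀), (η k) ^ 2 := by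
        have h1 : Finset.Icc (ℓ + (j + 1)) (ℓ + N₀) = Finset.Ioc (ℓ + j) (ℓ + N₀) := by
          rw [show ℓ + (j + 1) = (ℓ + j) + 1 by omega, Finset.Icc_add_one_left_eq_Ioc]
        rw [h1, ← Finset.Ioc_insert_left hle, Finset.sum_insert (by simp)]
      have hbound : ∑ k ∈ Finset.Icc (ℓ + j) (ℓ + N₀), (η k) ^ 2
          ≤ D (N₀ - j) * (η (ℓ + j)) ^ 2 := by
        have := hsum (ℓ + j) (N₀ - j)
        rwa [show ℓ + j + (N₀ - j) = ℓ + N₀ by omega] at this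
      have hη2 : (D (N₀ - j))⁻¹ * ∑ k ∈ Finset.Icc (ℓ + j) (ℓ + N₀), (η k) ^ 2
          ≤ (η (ℓ + j)) ^ 2 := by
        rw [inv_mul_le_iff₀ hDpos] at *
        linarith [hbound]
      nlinarith [hanonneg j]
    have hind : ∀ n, n ≤ N₀ →
        ∑ k ∈ Finset.Icc (ℓ + n) (ℓ + N₀), (η k) ^ 2
          ≤ (∏ j ∈ Finset.range n, (1 - (D (N₀ - j))⁻¹)) *
              ∑ k ∈ Finset.Icc ℓ (ℓ + N₀), (η k) ^ 2 := by
      intro n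
      induction n with
      | zero => simp
      | succ n ih =>
        intro h
        have hn : n < N₀ := by omega
        have hprodnn : 0 ≤ ∏ j ∈ Finset.range n, (1 - (D (N₀ - j))⁻¹) :=
          Finset.prod_nonneg fun j _ => hfac _
        calc ∑ k ∈ Finset.Icc (ℓ + (n + 1)) (ℓ + N₀), (η k) ^ 2
            ≤ (1 - (D (N₀ - n))⁻¹) * ∑ k ∈ Finset.Icc (ℓ + n) (ℓ + N₀), (η k) ^ 2 :=
              hstep n hn
          _ ≤ (1 - (D (N₀ - n))⁻¹) * ((∏ j ∈ Finset.range n, (1 - (D (N₀ - j))⁻¹)) *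
                ∑ k ∈ Finset.Icc ℓ (ℓ + N₀), (η k) ^ 2) :=
              mul_le_mul_of_nonneg_left (ih (by omega)) (hfac _)
          _ = (∏ j ∈ Finset.range (n + 1), (1 - (D (N₀ - j))⁻¹)) *
                ∑ k ∈ Finset.Icc ℓ (ℓ + N₀), (η k) ^ 2 := by
              rw [Finset.prod_range_succ]; ring
    have hfinal := hind N₀ le_rfl
    rw [show Finset.Icc (ℓ + N₀) (ℓ + N₀) = {ℓ + N₀} by simp] at hfinal
    rw [Finset.sum_singleton] at hfinal
    -- bound the product by exp of minus the sum
    have hprod : ∏ j ∈ Finset.range N₀, (1 - (D (N₀ - j))⁻¹)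
        ≤ Real.exp (-∑ j ∈ Finset.Icc 1 N₀, (D j)⁻¹) := by
      have h1 : ∏ j ∈ Finset.range N₀, (1 - (D (N₀ - j))⁻¹)
          ≤ ∏ j ∈ Finset.range N₀, Real.exp (-(D (N₀ - j))⁻¹) :=
        Finset.prod_le_prod (fun j _ => hfac _) (fun j _ => hfacexp _)
      have h2 : ∏ j ∈ Finset.range N₀, Real.exp (-(D (N₀ - j))⁻¹)
          = Real.exp (-∑ j ∈ Finset.range N₀, (D (N₀ - j))⁻¹) := by
        rw [← Real.exp_sum, ← Finset.sum_neg_distrib]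
      have h3 : ∑ j ∈ Finset.range N₀, (D (N₀ - j))⁻¹
          = ∑ j ∈ Finset.Icc 1 N₀, (D j)⁻¹ := by
        rw [← Finset.Ico_add_one_right_eq_Icc, Finset.sum_Ico_eq_sum_range]
        rw [show N₀ + 1 - 1 = N₀ by omega]
        rw [← Finset.sum_range_reflect (fun j => (D (1 + j))⁻¹) N₀]
        apply Finset.sum_congr rfl
        intro j hj
        simp only [Finset.mem_range] at hj
        congr 2
        omega
      rw [h2, h3] at h1
      exact h1
    have hDN₀pos : 0 < D N₀ := lt_trans one_pos (hD N₀)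
    have hsum0 := hsum ℓ N₀
    have hexp : Real.exp qlog = Real.exp (-∑ j ∈ Finset.Icc 1 N₀, (D j)⁻¹) * D N₀ := by
      rw [hqlog, sub_eq_add_neg, add_comm, Real.exp_add, Real.exp_log hDN₀pos]
    rw [hexp]
    have hen : 0 ≤ Real.exp (-∑ j ∈ Finset.Icc 1 N₀, (D j)⁻¹) := (Real.exp_pos _).le
    calc (η (ℓ + N₀)) ^ 2
        ≤ (∏ j ∈ Finset.range N₀, (1 - (D (N₀ - j))⁻¹)) *
            ∑ k ∈ Finset.Icc ℓ (ℓ + N₀), (η k) ^ 2 := hfinal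
      _ ≤ Real.exp (-∑ j ∈ Finset.Icc 1 N₀, (D j)⁻¹) *
            ∑ k ∈ Finset.Icc ℓ (ℓ + N₀), (η k) ^ 2 :=
          mul_le_mul_of_nonneg_right hprod (hanonneg 0 |>.trans_eq (by norm_num))
      _ ≤ Real.exp (-∑ j ∈ Finset.Icc 1 N₀, (D j)⁻¹) * (D N₀ * (η ℓ) ^ 2) :=
          mul_le_mul_of_nonneg_left hsum0 hen
      _ = Real.exp (-∑ j ∈ Finset.Icc 1 N₀, (D j)⁻¹) * D N₀ * (η ℓ) ^ 2 := by ring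
  -- iterate the key step
  have key2 : ∀ ℓ m : ℕ, (η (ℓ + m * N₀)) ^ 2 ≤ (Real.exp qlog) ^ m * (η ℓ) ^ 2 := by
    intro ℓ m
    induction m with
    | zero => simp
    | succ m ih =>
      have heq : ℓ + (m + 1) * N₀ = (ℓ + m * N₀) + N₀ := by ring
      rw [heq]
      calc (η ((ℓ + m * N₀) + N₀)) ^ 2
          ≤ Real.exp qlog * (η (ℓ + m * N₀)) ^ 2 := key _
        _ ≤ Real.exp qlog * ((Real.exp qlog) ^ m * (η ℓ) ^ 2) :=
            mul_le_mul_of_nonneg_left ih (Real.exp_pos _).le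
        _ = (Real.exp qlog) ^ (m + 1) * (η ℓ) ^ 2 := by ring
  refine ⟨?_, ?_⟩
  · rw [Real.exp_lt_one_iff]
    exact div_neg_of_neg_of_pos hneg hN₀R
  · intro k ℓ
    set m := k / N₀ with hm
    set r := k % N₀ with hr
    have hk : k = m * N₀ + r := (Nat.div_add_mod' k N₀).symm
    have hrlt : r < N₀ := Nat.mod_lt _ hN₀
    have h1 : (η (ℓ + k)) ^ 2 ≤ Cmon * (η (ℓ + m * N₀)) ^ 2 := by
      rw [show ℓ + k = (ℓ + m * N₀) + r by rw [hk]; ring]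
      exact hmon _ _
    have h2 : (η (ℓ + k)) ^ 2 ≤ Cmon * ((Real.exp qlog) ^ m * (η ℓ) ^ 2) :=
      h1.trans (mul_le_mul_of_nonneg_left (key2 ℓ m) hCmon.le)
    refine h2.trans ?_
    have hcoef : Cmon * (Real.exp qlog) ^ m
        ≤ (Cmon * Real.exp (-qlog)) * (Real.exp (qlog / N₀)) ^ k := by
      rw [← Real.exp_nat_mul, ← Real.exp_nat_mul, mul_assoc, ← Real.exp_add]
      apply mul_le_mul_of_nonneg_left _ hCmon.le
      rw [Real.exp_le_exp]
      have hkR : (k : ℝ) = m * N₀ + r := by rw [hk]; push_cast; ring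
      have hrR : (r : ℝ) ≤ N₀ := by exact_mod_cast hrlt.le
      have hkq : (k : ℝ) * (qlog / N₀) = m * qlog + r * qlog / N₀ := by
        field_simp; rw [hkR]; ring
      rw [hkq]
      have hr0 : 0 ≤ -qlog + r * qlog / N₀ := by
        have h6 : (r : ℝ) * qlog / N₀ = -((r : ℝ) * (-qlog) / N₀) := by ring
        rw [h6]
        have h7 : (r : ℝ) * (-qlog) / N₀ ≤ -qlog := by
          rw [div_le_iff₀ hN₀R]
          nlinarith [hrR, neg_pos.mpr hneg]
        linarith
      linarith
    calc Cmon * ((Real.exp qlog) ^ m * (η ℓ) ^ 2)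
        = (Cmon * (Real.exp qlog) ^ m) * (η ℓ) ^ 2 := by ring
      _ ≤ ((Cmon * Real.exp (-qlog)) * (Real.exp (qlog / N₀)) ^ k) * (η ℓ) ^ 2 :=
          mul_le_mul_of_nonneg_right hcoef (sq_nonneg _)
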